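/- Let d > 0 be a real number and let n : ℝ → ℝ be continuous, integrable, and nonnegative (n(ξ) ≥ 0 for all ξ). Set v := p_d ∗ n. Then v is differentiable on ℝ, with v'(x) = −(1/(2d)) ∫_ℝ sgn(x − ξ)·exp(−|x − ξ|/√d)·n(ξ) dξ, and moreover |v'(x)| ≤ (1/√d)·v(x) for every x ∈ ℝ. -/

import Mathlib

/-- The kernel `p_d(x) = (1/(2√d)) exp(-|x|/√d)`. -/
noncomputable def pd (d : ℝ) (x : ℝ) : ℝ :=
  1 / (2 * Real.sqrt d) * Real.exp (-|x| / Real.sqrt d)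

lemma measurable_realSign : Measurable Real.sign := by
  have h : Real.sign = fun r : ℝ => if r < 0 then (-1 : ℝ) else if 0 < r then 1 else 0 :=
    funext fun r => rfl
  rw [h]
  exact (measurable_const.ite (measurableSet_lt measurable_id measurable_const)
    ((measurable_const.ite (measurableSet_lt measurable_const measurable_id) measurable_const)))

lemma abs_realSign_le (r : ℝ) : |Real.sign r| ≤ 1 := by
  rcases lt_trichotomy r 0 with h | h | h
  · rw [Real.sign_of_neg h]; norm_num
  · rw [h, Real.sign_zero]; norm_num
  · rw [Real.sign_of_pos h]; norm_num

lemma neg_abs_div_nonpos (a s : ℝ) (hs : 0 < s) : -|a| / s ≤ 0 := by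
  apply div_nonpos_of_nonpos_of_nonneg (neg_nonpos.mpr (abs_nonneg a)) hs.le

lemma exp_neg_sub_exp_neg (u v_ : ℝ) (hu : 0 ≤ u) (hv : 0 ≤ v_) :
    |Real.exp (-u) - Real.exp (-v_)| ≤ |u - v_| := by
  wlog h : u ≤ v_ generalizing u v_
  · rw [abs_sub_comm, abs_sub_comm u v_]; exact this v_ u hv hu (le_of_not_ge h)
  rw [abs_of_nonneg (sub_nonneg.mpr (Real.exp_le_exp.mpr (by linarith))),
    abs_of_nonpos (by linarith)]
  have h1 : Real.exp (-u) - Real.exp (-v_) = Real.exp (-u) * (1 - Real.exp (u - v_)) := by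
    rw [mul_sub, mul_one, ← Real.exp_add]; ring_nf
  rw [h1]
  have h2 : 1 - Real.exp (u - v_) ≤ v_ - u := by
    have := Real.add_one_le_exp (u - v_); linarith
  have h3 : Real.exp (-u) ≤ 1 := Real.exp_le_one_iff.mpr (by linarith)
  have h4 : 0 ≤ 1 - Real.exp (u - v_) := by
    have : Real.exp (u - v_) ≤ 1 := Real.exp_le_one_iff.mpr (by linarith)
    linarith
  calc Real.exp (-u) * (1 - Real.exp (u - v_)) ≤ 1 * (1 - Real.exp (u - v_)) := by gcongr
    _ ≤ v_ - u := by linarith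
    _ = -(u - v_) := by ring

/-- **Key estimate of the first global existence case.** If `n ≥ 0` is continuous and
integrable and `v := p_d ∗ n`, then `v` is differentiable,
`v'(x) = -(1/(2d)) ∫ sgn(x-ξ) e^{-|x-ξ|/√d} n(ξ) dξ`, and `|v'(x)| ≤ (1/√d) v(x)`. -/
theorem deriv_convolution_nonneg_bound (d : ℝ) (hd : 0 < d) (n : ℝ → ℝ)
    (hc : Continuous n) (hi : MeasureTheory.Integrable n) (hpos : ∀ ξ, 0 ≤ n ξ)
    (v : ℝ → ℝ) (hv : v = fun x => ∫ ξ : ℝ, pd d (x - ξ) * n ξ) :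
    Differentiable ℝ v ∧
    (∀ x : ℝ, deriv v x
      = -(1 / (2 * d))
          * ∫ ξ : ℝ, Real.sign (x - ξ) * Real.exp (-|x - ξ| / Real.sqrt d) * n ξ) ∧
    (∀ x : ℝ, |deriv v x| ≤ (1 / Real.sqrt d) * v x) := by
  set s := Real.sqrt d with hsdef
  have hs : 0 < s := Real.sqrt_pos.mpr hd
  have hs2 : s * s = d := Real.mul_self_sqrt hd.le
  set F : ℝ → ℝ → ℝ := fun x ξ => pd d (x - ξ) * n ξ with hF
  set G : ℝ → ℝ → ℝ := fun x ξ =>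
    -(1 / (2 * d)) * (Real.sign (x - ξ) * Real.exp (-|x - ξ| / s) * n ξ) with hG
  have hexpc : ∀ x : ℝ, Continuous fun ξ : ℝ => Real.exp (-|x - ξ| / s) := by
    intro x
    exact Real.continuous_exp.comp (((continuous_const.sub continuous_id).abs.neg).div_const s)
  have hFc : ∀ x : ℝ, Continuous (F x) := by
    intro x
    have : Continuous fun ξ : ℝ => pd d (x - ξ) := by
      unfold pd
      rw [← hsdef]
      exact continuous_const.mul (hexpc x)
    exact this.mul hc
  -- the key: for every x₀, integrability of G x₀ and HasDerivAt
  have key : ∀ x₀ : ℝ, MeasureTheory.Integrable (G x₀) ∧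
      HasDerivAt (fun x => ∫ ξ : ℝ, F x ξ) (∫ ξ : ℝ, G x₀ ξ) x₀ := by
    intro x₀
    apply hasDerivAt_integral_of_dominated_loc_of_lip (bound := fun ξ => 1 / (2 * d) * n ξ)
      (s := Metric.ball x₀ 1) (Metric.ball_mem_nhds x₀ one_pos)
    · filter_upwards with x
      exact (hFc x).aestronglyMeasurable
    · -- integrability of F x₀
      apply MeasureTheory.Integrable.mono' (hi.const_mul (1 / (2 * s)))
      · exact (hFc x₀).aestronglyMeasurable
      · filter_upwards with ξ
        have h1 : Real.exp (-|x₀ - ξ| / s) ≤ 1 :=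
          Real.exp_le_one_iff.mpr (neg_abs_div_nonpos _ _ hs)
        have hFx : F x₀ ξ = 1 / (2 * s) * Real.exp (-|x₀ - ξ| / s) * n ξ := rfl
        rw [Real.norm_eq_abs, hFx, abs_mul, abs_mul, abs_of_nonneg (hpos ξ),
          abs_of_nonneg (Real.exp_pos _).le,
          abs_of_nonneg (show (0:ℝ) ≤ 1 / (2 * s) by positivity)]
        calc 1 / (2 * s) * Real.exp (-|x₀ - ξ| / s) * n ξ
            ≤ 1 / (2 * s) * 1 * n ξ := by gcongr; exact hpos ξ
          _ = 1 / (2 * s) * n ξ := by ring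
    · -- measurability of G x₀
      apply Measurable.aestronglyMeasurable
      exact (measurable_const.mul (((measurable_realSign.comp (measurable_const.sub
        measurable_id)).mul ((hexpc x₀).measurable)).mul hc.measurable))
    · -- Lipschitz
      filter_upwards with ξ
      rw [lipschitzOnWith_iff_dist_le_mul]
      intro x _ y _
      have hcoe : ((Real.nnabs (1 / (2 * d) * n ξ)) : ℝ) = 1 / (2 * d) * n ξ := by
        rw [Real.coe_nnabs, abs_of_nonneg (mul_nonneg (by positivity) (hpos ξ))]
      rw [hcoe, Real.dist_eq, Real.dist_eq]
      have h1 : F x ξ - F y ξ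
          = 1 / (2 * s) * (Real.exp (-|x - ξ| / s) - Real.exp (-|y - ξ| / s)) * n ξ := by
        show pd d (x - ξ) * n ξ - pd d (y - ξ) * n ξ = _
        simp only [pd, ← hsdef]; ring
      rw [h1, abs_mul, abs_mul, abs_of_nonneg (hpos ξ),
        abs_of_nonneg (show (0:ℝ) ≤ 1 / (2 * s) by positivity)]
      have h2 : |Real.exp (-|x - ξ| / s) - Real.exp (-|y - ξ| / s)| ≤ (1 / s) * |x - y| := by
        have h3 := exp_neg_sub_exp_neg (|x - ξ| / s) (|y - ξ| / s) (by positivity) (by positivity)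
        have h4 : abs (|x - ξ| / s - |y - ξ| / s) ≤ (1 / s) * |x - y| := by
          have h5 : abs (|x - ξ| - |y - ξ|) ≤ |x - y| := by
            simpa using abs_abs_sub_abs_le_abs_sub (x - ξ) (y - ξ)
          calc abs (|x - ξ| / s - |y - ξ| / s) = abs (|x - ξ| - |y - ξ|) / s := by
                rw [div_sub_div_same, abs_div, abs_of_pos hs]
            _ ≤ |x - y| / s := by gcongr
            _ = (1 / s) * |x - y| := by ring
        rw [neg_div, neg_div]
        exact h3.trans h4
      calc 1 / (2 * s) * |Real.exp (-|x - ξ| / s) - Real.exp (-|y - ξ| / s)| * n ξ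
          ≤ 1 / (2 * s) * ((1 / s) * |x - y|) * n ξ := by
            gcongr
            exact hpos ξ
        _ = 1 / (2 * d) * n ξ * |x - y| := by rw [← hs2]; field_simp
    · exact hi.const_mul _
    · -- a.e. differentiability
      have hae : ∀ᵐ ξ : ℝ, ξ ≠ x₀ := by
        simp only [ne_eq, MeasureTheory.ae_iff, not_not]
        rw [show {a : ℝ | a = x₀} = {x₀} from Set.setOf_eq_eq_singleton]
        exact Real.volume_singleton
      filter_upwards [hae] with ξ hξ
      rcases lt_or_gt_of_ne hξ with h | h
      · -- ξ < x₀ : near x₀, |x - ξ| = x - ξ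
        have heq : (fun x => F x ξ) =ᶠ[nhds x₀]
            (fun x => 1 / (2 * s) * Real.exp ((ξ - x) / s) * n ξ) := by
          filter_upwards [eventually_gt_nhds h] with x hx
          show pd d (x - ξ) * n ξ = _
          simp only [pd, ← hsdef]
          rw [abs_of_pos (by linarith)]
          ring_nf
        have hder : HasDerivAt (fun x => 1 / (2 * s) * Real.exp ((ξ - x) / s) * n ξ)
            (1 / (2 * s) * (Real.exp ((ξ - x₀) / s) * (-1 / s)) * n ξ) x₀ := by
          have h1 : HasDerivAt (fun x : ℝ => (ξ - x) / s) (-1 / s) x₀ := by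
            simpa using ((hasDerivAt_id x₀).const_sub ξ).div_const s
          exact ((h1.exp.const_mul (1 / (2 * s)))).mul_const (n ξ)
        have hfin := hder.congr_of_eventuallyEq heq
        convert hfin using 1
        simp only [hG]
        rw [Real.sign_of_pos (by linarith : (0:ℝ) < x₀ - ξ), abs_of_pos (by linarith), ← hs2]
        have : -(x₀ - ξ) / s = (ξ - x₀) / s := by ring
        rw [this]
        ring
      · -- x₀ < ξ
        have heq : (fun x => F x ξ) =ᶠ[nhds x₀]
            (fun x => 1 / (2 * s) * Real.exp ((x - ξ) / s) * n ξ) := by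
          filter_upwards [eventually_lt_nhds h] with x hx
          show pd d (x - ξ) * n ξ = _
          simp only [pd, ← hsdef]
          rw [abs_of_neg (by linarith)]
          ring_nf
        have hder : HasDerivAt (fun x => 1 / (2 * s) * Real.exp ((x - ξ) / s) * n ξ)
            (1 / (2 * s) * (Real.exp ((x₀ - ξ) / s) * (1 / s)) * n ξ) x₀ := by
          have h1 : HasDerivAt (fun x : ℝ => (x - ξ) / s) (1 / s) x₀ := by
            simpa using ((hasDerivAt_id x₀).sub_const ξ).div_const s
          exact ((h1.exp.const_mul (1 / (2 * s)))).mul_const (n ξ)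
        have hfin := hder.congr_of_eventuallyEq heq
        convert hfin using 1
        simp only [hG]
        rw [Real.sign_of_neg (by linarith : x₀ - ξ < 0), abs_of_neg (by linarith), ← hs2]
        have : -(-(x₀ - ξ)) / s = (x₀ - ξ) / s := by ring
        rw [this]
        ring
  have hveq : v = fun x => ∫ ξ : ℝ, F x ξ := hv
  have hderiv : ∀ x : ℝ, HasDerivAt v (∫ ξ : ℝ, G x ξ) x := by
    intro x; rw [hveq]; exact (key x).2
  have hGint : ∀ x : ℝ, MeasureTheory.Integrable (G x) := fun x => (key x).1
  refine ⟨fun x => (hderiv x).differentiableAt, ?_, ?_⟩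
  · intro x
    rw [(hderiv x).deriv]
    simp only [hG]
    rw [MeasureTheory.integral_const_mul]
  · intro x
    rw [(hderiv x).deriv]
    -- the integrand without sign, h ξ := sign * exp * n
    set h : ℝ → ℝ := fun ξ => Real.sign (x - ξ) * Real.exp (-|x - ξ| / s) * n ξ with hh
    have hGx : G x = fun ξ => -(1 / (2 * d)) * h ξ := rfl
    have hhint : MeasureTheory.Integrable h := by
      have h6 := (hGint x).const_mul (-(2 * d))
      convert h6 using 1
      · rfl
      funext ξ
      rw [hGx]
      simp only
      field_simp
    have heint : MeasureTheory.Integrable (fun ξ => Real.exp (-|x - ξ| / s) * n ξ) := by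
      apply MeasureTheory.Integrable.mono' hi
      · exact ((hexpc x).mul hc).aestronglyMeasurable
      · filter_upwards with ξ
        rw [Real.norm_eq_abs, abs_mul, abs_of_nonneg (hpos ξ),
          abs_of_nonneg (Real.exp_pos _).le]
        have h1 : Real.exp (-|x - ξ| / s) ≤ 1 :=
          Real.exp_le_one_iff.mpr (neg_abs_div_nonpos _ _ hs)
        calc Real.exp (-|x - ξ| / s) * n ξ ≤ 1 * n ξ := by gcongr; exact hpos ξ
          _ = n ξ := one_mul _
    have habs : |∫ ξ : ℝ, G x ξ| ≤ 1 / (2 * d) * ∫ ξ : ℝ, Real.exp (-|x - ξ| / s) * n ξ := by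
      rw [hGx, MeasureTheory.integral_const_mul, abs_mul, abs_neg,
        abs_of_nonneg (show (0:ℝ) ≤ 1 / (2 * d) by positivity)]
      gcongr
      calc |∫ ξ : ℝ, h ξ| ≤ ∫ ξ : ℝ, |h ξ| := by
            simpa [Real.norm_eq_abs] using
              MeasureTheory.norm_integral_le_integral_norm (μ := MeasureTheory.volume) h
        _ ≤ ∫ ξ : ℝ, Real.exp (-|x - ξ| / s) * n ξ := by
            apply MeasureTheory.integral_mono hhint.abs heint
            intro ξ
            rw [hh]
            simp only
            rw [abs_mul, abs_mul, abs_of_nonneg (hpos ξ), abs_of_nonneg (Real.exp_pos _).le]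
            calc |Real.sign (x - ξ)| * Real.exp (-|x - ξ| / s) * n ξ
                ≤ 1 * Real.exp (-|x - ξ| / s) * n ξ := by
                  gcongr
                  · exact hpos ξ
                  · exact abs_realSign_le _
              _ = Real.exp (-|x - ξ| / s) * n ξ := by ring
    have hvx : v x = 1 / (2 * s) * ∫ ξ : ℝ, Real.exp (-|x - ξ| / s) * n ξ := by
      rw [hv]
      simp only [pd, ← hsdef]
      rw [← MeasureTheory.integral_const_mul]
      congr 1; funext ξ; ring
    rw [hvx]
    calc |∫ ξ : ℝ, G x ξ| ≤ 1 / (2 * d) * ∫ ξ : ℝ, Real.exp (-|x - ξ| / s) * n ξ := habs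
      _ = 1 / s * (1 / (2 * s) * ∫ ξ : ℝ, Real.exp (-|x - ξ| / s) * n ξ) := by
          rw [← hs2]; ring
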